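/- Let p(x) = Σ_z π(z) ∏_{j} p_j(x_j | z) be a latent-variable mixture computed by a smooth, decomposable PC on a fixed input x with p(x) > 0. For each sum edge (n,c) of the circuit, the flow F_{n,c}(x) (Definition 4) equals the conditional probability, under the generative sampling process conditioned on the event that the sampled instance is x, that edge (n,c) is traversed—provided the circuit is tree-shaped. Consequently F_{n,c}(x) ∈ [0,1]. -/

import Mathlib

/-- A tree-shaped probabilistic circuit skeleton: leaves (input units),
sum units with weighted children, and product units. -/
inductive PCTree where
  | leaf : PCTree
  | sum : List (ℝ × PCTree) → PCTree
  | prod : List PCTree → PCTree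

namespace PCTree

/-- Validity: at every sum unit the child weights are nonnegative and sum to 1. -/
inductive Valid : PCTree → Prop
  | leaf : Valid .leaf
  | sum {cs : List (ℝ × PCTree)} :
      (∀ pc ∈ cs, 0 ≤ pc.1) → (∀ pc ∈ cs, Valid pc.2) →
      (cs.map Prod.fst).sum = 1 → Valid (.sum cs)
  | prod {cs : List PCTree} : (∀ c ∈ cs, Valid c) → Valid (.prod cs)

/-- Nodes are addressed by paths (lists of child indices) from the root. -/
def IsNode : PCTree → List ℕ → Prop
  | _, [] => True
  | .leaf, _ :: _ => False
  | .sum cs, i :: p => match cs[i]? with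
      | some pc => IsNode pc.2 p
      | none => False
  | .prod cs, i :: p => match cs[i]? with
      | some c => IsNode c p
      | none => False
  termination_by _ path => path.length

/-- Top-down probability of the node at a given path (Definition 3): the root has
top-down probability 1, a sum unit distributes its top-down probability to its
children weighted by the edge parameters, and a product unit passes it unchanged. -/
def q : PCTree → List ℕ → ℝ
  | _, [] => 1
  | .leaf, _ :: _ => 0
  | .sum cs, i :: p => match cs[i]? with
      | some pc => pc.1 * q pc.2 p
      | none => 0
  | .prod cs, i :: p => match cs[i]? with
      | some c => q c p
      | none => 0
  termination_by _ path => path.length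

mutual
/-- All runs of the generative sampling process (Algorithm 1), as pairs of
(set of visited node paths, probability of that run). At a sum unit one child is
chosen (with its edge probability as factor); at a product unit all children are
visited (probabilities multiply). -/
def runs : PCTree → List (Finset (List ℕ) × ℝ)
  | .leaf => [({[]}, 1)]
  | .sum cs => runsSum 0 cs
  | .prod cs => runsProd 0 cs

def runsSum : ℕ → List (ℝ × PCTree) → List (Finset (List ℕ) × ℝ)
  | _, [] => []
  | i, pc :: rest =>
      ((runs pc.2).map fun Sw => (insert [] (Sw.1.image (i :: ·)), pc.1 * Sw.2)) ++
        runsSum (i + 1) rest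

def runsProd : ℕ → List PCTree → List (Finset (List ℕ) × ℝ)
  | _, [] => [({[]}, 1)]
  | i, c :: rest =>
      (runs c).flatMap fun Sw =>
        (runsProd (i + 1) rest).map fun Tw =>
          (insert [] (Sw.1.image (i :: ·)) ∪ Tw.1, Sw.2 * Tw.2)
end


mutual
/-- Evaluation `p_n(x)` of the sub-circuit rooted at prefix `pre`, where
`f q` gives the likelihood of the input unit at leaf path `q` on the fixed input `x`. -/
def eval (f : List ℕ → ℝ) : List ℕ → PCTree → ℝ
  | pre, .leaf => f pre
  | pre, .sum cs => evalSum f pre 0 cs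
  | pre, .prod cs => evalProd f pre 0 cs

def evalSum (f : List ℕ → ℝ) : List ℕ → ℕ → List (ℝ × PCTree) → ℝ
  | _, _, [] => 0
  | pre, i, pc :: rest => pc.1 * eval f (pre ++ [i]) pc.2 + evalSum f pre (i + 1) rest

def evalProd (f : List ℕ → ℝ) : List ℕ → ℕ → List PCTree → ℝ
  | _, _, [] => 1
  | pre, i, c :: rest => eval f (pre ++ [i]) c * evalProd f pre (i + 1) rest
end

/-- Circuit flow (Definition 4) of the node at the given path, on the input with leaf
likelihoods `f`: the root has flow 1; flow passes unchanged through product units; a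
sum unit `n'` passes flow `θ_{c'|n'} p_{c'}(x)/p_{n'}(x)` to child `c'`. The flow of a
sum edge `(n,c)` in a tree equals the flow of the child node `c`. -/
noncomputable def flowAux (f : List ℕ → ℝ) : PCTree → List ℕ → List ℕ → ℝ
  | _, _, [] => 1
  | .leaf, _, _ :: _ => 0
  | .sum cs, pre, i :: p =>
      match cs[i]? with
      | some pc =>
          (pc.1 * eval f (pre ++ [i]) pc.2 / eval f pre (.sum cs)) *
            flowAux f pc.2 (pre ++ [i]) p
      | none => 0
  | .prod cs, pre, i :: p =>
      match cs[i]? with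
      | some c => flowAux f c (pre ++ [i]) p
      | none => 0
  termination_by _ _ path => path.length

noncomputable def flow (f : List ℕ → ℝ) (t : PCTree) (n : List ℕ) : ℝ := flowAux f t [] n

/-- Whether the path addresses an input unit (leaf) of the circuit. -/
def isLeafAt : PCTree → List ℕ → Bool
  | .leaf, [] => true
  | .leaf, _ :: _ => false
  | .sum _, [] => false
  | .prod _, [] => false
  | .sum cs, i :: p => match cs[i]? with | some pc => isLeafAt pc.2 p | none => false
  | .prod cs, i :: p => match cs[i]? with | some c => isLeafAt c p | none => false
  termination_by _ path => path.length

/-- Likelihood of observing the fixed input `x` (with leaf likelihoods `f`) along a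
given run: the product of the input-unit likelihoods at the leaves visited by the run. -/
def runLike (f : List ℕ → ℝ) (t : PCTree) (S : Finset (List ℕ)) : ℝ :=
  ∏ q ∈ S.filter (fun q => t.isLeafAt q), f q

section ListHelpers
lemma sum_map_mul_left' {α} (l : List α) (c : ℝ) (h : α → ℝ) :
    (l.map fun x => c * h x).sum = c * (l.map h).sum := by
  induction l with
  | nil => simp
  | cons a l ih => simp [ih, mul_add]

lemma sum_map_filter_map' {α β} (l : List α) (g : α → β) (q : β → Bool) (h : β → ℝ) :
    (((l.map g).filter q).map h).sum = ((l.filter fun a => q (g a)).map fun a => h (g a)).sum := by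
  induction l with
  | nil => simp
  | cons a l ih =>
    by_cases hq : q (g a) <;> simp [List.filter_cons, hq, ih]

lemma sum_map_flatMap' {α β} (l : List α) (g : α → List β) (h : β → ℝ) :
    ((l.flatMap g).map h).sum = (l.map fun a => (((g a)).map h).sum).sum := by
  induction l with
  | nil => simp
  | cons a l ih => simp [ih]

lemma sum_map_filter_flatMap' {α β} (l : List α) (g : α → List β) (q : β → Bool) (h : β → ℝ) :
    (((l.flatMap g).filter q).map h).sum
      = (l.map fun a => ((((g a).filter q)).map h).sum).sum := by
  induction l with
  | nil => simp
  | cons a l ih => simp [List.filter_append, ih]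

lemma sum_map_ite' {α} (l : List α) (q : α → Bool) (h : α → ℝ) :
    (l.map fun a => if q a then h a else 0).sum = ((l.filter q).map h).sum := by
  induction l with
  | nil => simp
  | cons a l ih => by_cases hq : q a <;> simp [List.filter_cons, hq, ih]

lemma sum_filter_add_sum_filter_not' {α} (l : List α) (q : α → Bool) (h : α → ℝ) :
    ((l.filter q).map h).sum + ((l.filter (fun a => !q a)).map h).sum = (l.map h).sum := by
  induction l with
  | nil => simp
  | cons a l ih =>
    by_cases hq : q a <;> simp [List.filter_cons, hq] <;> linarith
end ListHelpers

/-- `if-then-else` leaf weight used to express `runLike` as a product over the whole run. -/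
noncomputable def lw (f : List ℕ → ℝ) (t : PCTree) (q : List ℕ) : ℝ :=
  if t.isLeafAt q then f q else 1

theorem runsProd_head : ∀ (cs : List PCTree) (i : ℕ), ∀ Sw ∈ runsProd i cs,
    ∀ q ∈ Sw.1, q = [] ∨ ∃ j r, q = j :: r ∧ i ≤ j := by
  intro cs
  induction cs with
  | nil =>
    intro i Sw hSw q hq; simp [runsProd] at hSw; subst hSw; simp at hq; exact Or.inl hq
  | cons c rest ih =>
    intro i Sw hSw q hq
    simp only [runsProd, List.mem_flatMap, List.mem_map] at hSw
    obtain ⟨⟨S, w⟩, hS, ⟨T, b⟩, hT, rfl⟩ := hSw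
    simp only [Finset.mem_union, Finset.mem_insert, Finset.mem_image] at hq
    rcases hq with (rfl | ⟨r, hr, rfl⟩) | hqT
    · exact Or.inl rfl
    · exact Or.inr ⟨i, r, rfl, le_refl i⟩
    · rcases ih (i+1) ⟨T, b⟩ hT q hqT with h | ⟨j, r, rfl, hj⟩
      · exact Or.inl h
      · exact Or.inr ⟨j, r, rfl, by omega⟩

theorem runsSum_head : ∀ (cs : List (ℝ × PCTree)) (i : ℕ), ∀ Sw ∈ runsSum i cs,
    ∀ q ∈ Sw.1, q = [] ∨ ∃ j r, q = j :: r ∧ i ≤ j := by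
  intro cs
  induction cs with
  | nil => intro i Sw hSw; simp [runsSum] at hSw
  | cons pc rest ih =>
    intro i Sw hSw q hq
    simp only [runsSum, List.mem_append, List.mem_map] at hSw
    rcases hSw with ⟨⟨S, w⟩, hS, rfl⟩ | hSw
    · simp [Finset.mem_insert, Finset.mem_image] at hq
      rcases hq with rfl | ⟨r, hr, rfl⟩
      · exact Or.inl rfl
      · exact Or.inr ⟨i, r, rfl, le_refl i⟩
    · rcases ih (i+1) Sw hSw q hq with h | ⟨j, r, rfl, hj⟩
      · exact Or.inl h
      · exact Or.inr ⟨j, r, rfl, by omega⟩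

theorem nil_mem_runsSum (cs : List (ℝ × PCTree)) (i : ℕ) :
    ∀ Sw ∈ runsSum i cs, ([] : List ℕ) ∈ Sw.1 := by
  induction cs generalizing i with
  | nil => intro Sw hSw; simp [runsSum] at hSw
  | cons pc rest ih =>
    intro Sw hSw
    simp only [runsSum, List.mem_append, List.mem_map] at hSw
    rcases hSw with ⟨⟨S, w⟩, hS, rfl⟩ | hSw
    · simp
    · exact ih (i+1) Sw hSw

theorem nil_mem_runsProd (cs : List PCTree) (i : ℕ) :
    ∀ Sw ∈ runsProd i cs, ([] : List ℕ) ∈ Sw.1 := by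
  induction cs generalizing i with
  | nil => intro Sw hSw; simp [runsProd] at hSw; subst hSw; simp
  | cons c rest ih =>
    intro Sw hSw
    simp only [runsProd, List.mem_flatMap, List.mem_map] at hSw
    obtain ⟨⟨S, w⟩, hS, ⟨T, b⟩, hT, rfl⟩ := hSw
    simp

theorem nil_mem_runs (t : PCTree) : ∀ Sw ∈ runs t, ([] : List ℕ) ∈ Sw.1 := by
  cases t with
  | leaf => intro Sw hSw; simp [runs] at hSw; subst hSw; simp
  | sum cs => exact nil_mem_runsSum cs 0
  | prod cs => exact nil_mem_runsProd cs 0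
mutual
theorem runs_nonneg : ∀ (t : PCTree), Valid t → ∀ Sw ∈ runs t, 0 ≤ Sw.2
  | .leaf, _, Sw, hSw => by simp [runs] at hSw; subst hSw; norm_num
  | .sum cs, hv, Sw, hSw => by
      cases hv with
      | sum hw hvc _ => exact runsSum_nonneg cs 0 hw hvc Sw hSw
  | .prod cs, hv, Sw, hSw => by
      cases hv with
      | prod hvc => exact runsProd_nonneg cs 0 hvc Sw hSw

theorem runsSum_nonneg : ∀ (cs : List (ℝ × PCTree)) (i : ℕ),
    (∀ pc ∈ cs, 0 ≤ pc.1) → (∀ pc ∈ cs, Valid pc.2) → ∀ Sw ∈ runsSum i cs, 0 ≤ Sw.2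
  | [], _, _, _, Sw, hSw => by simp [runsSum] at hSw
  | pc :: rest, i, hw, hvc, Sw, hSw => by
      simp only [runsSum, List.mem_append, List.mem_map] at hSw
      rcases hSw with ⟨⟨S, w⟩, hS, rfl⟩ | hSw
      · exact mul_nonneg (hw pc (by simp)) (runs_nonneg pc.2 (hvc pc (by simp)) ⟨S, w⟩ hS)
      · exact runsSum_nonneg rest (i+1) (fun x hx => hw x (by simp [hx]))
          (fun x hx => hvc x (by simp [hx])) Sw hSw

theorem runsProd_nonneg : ∀ (cs : List PCTree) (i : ℕ),
    (∀ c ∈ cs, Valid c) → ∀ Sw ∈ runsProd i cs, 0 ≤ Sw.2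
  | [], _, _, Sw, hSw => by simp [runsProd] at hSw; subst hSw; norm_num
  | c :: rest, i, hvc, Sw, hSw => by
      simp only [runsProd, List.mem_flatMap, List.mem_map] at hSw
      obtain ⟨⟨S, w⟩, hS, ⟨T, b⟩, hT, rfl⟩ := hSw
      exact mul_nonneg (runs_nonneg c (hvc c (by simp)) ⟨S, w⟩ hS)
        (runsProd_nonneg rest (i+1) (fun x hx => hvc x (by simp [hx])) ⟨T, b⟩ hT)
end

mutual
theorem eval_pre : ∀ (t : PCTree) (f : List ℕ → ℝ) (p1 p2 : List ℕ),
    eval f (p1 ++ p2) t = eval (fun q => f (p1 ++ q)) p2 t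
  | .leaf, f, p1, p2 => by simp [eval]
  | .sum cs, f, p1, p2 => by simp only [eval]; exact evalSum_pre cs f p1 p2 0
  | .prod cs, f, p1, p2 => by simp only [eval]; exact evalProd_pre cs f p1 p2 0

theorem evalSum_pre : ∀ (cs : List (ℝ × PCTree)) (f : List ℕ → ℝ) (p1 p2 : List ℕ) (i : ℕ),
    evalSum f (p1 ++ p2) i cs = evalSum (fun q => f (p1 ++ q)) p2 i cs
  | [], f, p1, p2, i => by simp [evalSum]
  | pc :: rest, f, p1, p2, i => by
      simp only [evalSum]
      rw [List.append_assoc, eval_pre pc.2 f p1 (p2 ++ [i]), evalSum_pre rest f p1 p2 (i+1)]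

theorem evalProd_pre : ∀ (cs : List PCTree) (f : List ℕ → ℝ) (p1 p2 : List ℕ) (i : ℕ),
    evalProd f (p1 ++ p2) i cs = evalProd (fun q => f (p1 ++ q)) p2 i cs
  | [], f, p1, p2, i => by simp [evalProd]
  | c :: rest, f, p1, p2, i => by
      simp only [evalProd]
      rw [List.append_assoc, eval_pre c f p1 (p2 ++ [i]), evalProd_pre rest f p1 p2 (i+1)]
end

theorem eval_cons (t : PCTree) (f : List ℕ → ℝ) (i : ℕ) :
    eval f [i] t = eval (fun q => f (i :: q)) [] t := by
  have := eval_pre t f [i] []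
  simpa using this
theorem flowAux_pre : ∀ (n : List ℕ) (t : PCTree) (f : List ℕ → ℝ) (p1 p2 : List ℕ),
    flowAux f t (p1 ++ p2) n = flowAux (fun q => f (p1 ++ q)) t p2 n := by
  intro n
  induction n with
  | nil => intro t f p1 p2; simp [flowAux]
  | cons i p ih =>
    intro t f p1 p2
    cases t with
    | leaf => simp [flowAux]
    | sum cs =>
      simp only [flowAux]
      cases hcs : cs[i]? with
      | none => rfl
      | some pc =>
        simp only []
        rw [List.append_assoc, eval_pre pc.2 f p1 (p2 ++ [i]), eval_pre (.sum cs) f p1 p2,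
          ih pc.2 f p1 (p2 ++ [i])]
    | prod cs =>
      simp only [flowAux]
      cases hcs : cs[i]? with
      | none => rfl
      | some c =>
        simp only []
        rw [List.append_assoc, ih c f p1 (p2 ++ [i])]

theorem flowAux_cons (t : PCTree) (f : List ℕ → ℝ) (i : ℕ) (p : List ℕ) :
    flowAux f t [i] p = flowAux (fun q => f (i :: q)) t [] p := by
  have := flowAux_pre p t f [i] []
  simpa using this
lemma sum_map_mul_right' {α} (l : List α) (c : ℝ) (h : α → ℝ) :
    (l.map fun x => h x * c).sum = (l.map h).sum * c := by
  induction l with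
  | nil => simp
  | cons a l ih => simp [ih, add_mul]

lemma prod_insert_image (S : Finset (List ℕ)) (i : ℕ) (G : List ℕ → ℝ) (hG : G [] = 1) :
    ∏ q ∈ insert ([] : List ℕ) (S.image (i :: ·)), G q = ∏ r ∈ S, G (i :: r) := by
  rw [Finset.prod_insert (by simp), hG, one_mul,
    Finset.prod_image (by intro x _ y _ h; simpa using h)]

lemma prod_union_one (A B : Finset (List ℕ)) (G : List ℕ → ℝ)
    (h : ∀ q ∈ A ∩ B, G q = 1) :
    ∏ q ∈ A ∪ B, G q = (∏ q ∈ A, G q) * ∏ q ∈ B, G q := by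
  have h2 := Finset.prod_union_inter (s₁ := A) (s₂ := B) (f := G)
  rwa [Finset.prod_eq_one h, mul_one] at h2

mutual
theorem sum_runs_eq_eval : ∀ (t : PCTree) (f : List ℕ → ℝ),
    ((runs t).map fun Sw => Sw.2 * ∏ q ∈ Sw.1, lw f t q).sum = eval f [] t
  | .leaf, f => by simp [runs, eval, lw, isLeafAt]
  | .sum cs, f => by
      simp only [runs, eval]
      refine sum_runsSum_eq cs 0 f (lw f (.sum cs)) (by simp [lw, isLeafAt]) ?_
      intro k pc r hk
      simp [lw, isLeafAt, hk]
  | .prod cs, f => by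
      simp only [runs, eval]
      refine sum_runsProd_eq cs 0 f (lw f (.prod cs)) (by simp [lw, isLeafAt]) ?_
      intro k c r hk
      simp [lw, isLeafAt, hk]

theorem sum_runsSum_eq : ∀ (cs : List (ℝ × PCTree)) (i : ℕ) (f G : List ℕ → ℝ),
    G [] = 1 →
    (∀ k pc r, cs[k]? = some pc → G ((i+k) :: r) = if isLeafAt pc.2 r then f ((i+k) :: r) else 1) →
    ((runsSum i cs).map fun Sw => Sw.2 * ∏ q ∈ Sw.1, G q).sum = evalSum f [] i cs
  | [], i, f, G, hG1, hG => by simp [runsSum, evalSum]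
  | pc :: rest, i, f, G, hG1, hG => by
      simp only [runsSum, evalSum, List.map_append, List.sum_append, List.map_map]
      have h1 : ((fun Sw : Finset (List ℕ) × ℝ => Sw.2 * ∏ q ∈ Sw.1, G q) ∘
            (fun Sw : Finset (List ℕ) × ℝ => (insert [] (Sw.1.image (i :: ·)), pc.1 * Sw.2)))
          = fun Sw : Finset (List ℕ) × ℝ =>
              pc.1 * (Sw.2 * ∏ r ∈ Sw.1, lw (fun q => f (i :: q)) pc.2 r) := by
        funext Sw
        simp only [Function.comp]
        rw [prod_insert_image Sw.1 i G hG1]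
        have : ∀ r ∈ Sw.1, G (i :: r) = lw (fun q => f (i :: q)) pc.2 r := by
          intro r _
          have := hG 0 pc r (by simp)
          simpa [lw] using this
        rw [Finset.prod_congr rfl this]; ring
      rw [h1, sum_map_mul_left', sum_runs_eq_eval pc.2 (fun q => f (i :: q)), ← eval_cons]
      have h2 : ((runsSum (i+1) rest).map fun Sw => Sw.2 * ∏ q ∈ Sw.1, G q).sum
          = evalSum f [] (i+1) rest := by
        refine sum_runsSum_eq rest (i+1) f G hG1 ?_
        intro k pc' r hk
        have := hG (k+1) pc' r (by simpa using hk)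
        have e : i + (k+1) = i + 1 + k := by omega
        rwa [e] at this
      rw [h2]
      simp

theorem sum_runsProd_eq : ∀ (cs : List PCTree) (i : ℕ) (f G : List ℕ → ℝ),
    G [] = 1 →
    (∀ k c r, cs[k]? = some c → G ((i+k) :: r) = if isLeafAt c r then f ((i+k) :: r) else 1) →
    ((runsProd i cs).map fun Sw => Sw.2 * ∏ q ∈ Sw.1, G q).sum = evalProd f [] i cs
  | [], i, f, G, hG1, hG => by simp [runsProd, evalProd, hG1]
  | c :: rest, i, f, G, hG1, hG => by
      simp only [runsProd, evalProd]
      rw [sum_map_flatMap']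
      have h1 : ∀ Sw ∈ runs c,
          ((((runsProd (i+1) rest).map fun Tw =>
              ((insert [] (Sw.1.image (i :: ·)) ∪ Tw.1 : Finset (List ℕ)), Sw.2 * Tw.2)).map
            fun Sw => Sw.2 * ∏ q ∈ Sw.1, G q).sum)
          = (Sw.2 * ∏ r ∈ Sw.1, lw (fun q => f (i :: q)) c r) * evalProd f [] (i+1) rest := by
        intro Sw hSw
        rw [List.map_map]
        have h2 : ∀ Tw ∈ runsProd (i+1) rest,
            ((fun Sw : Finset (List ℕ) × ℝ => Sw.2 * ∏ q ∈ Sw.1, G q) ∘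
              (fun Tw : Finset (List ℕ) × ℝ =>
                ((insert [] (Sw.1.image (i :: ·)) ∪ Tw.1 : Finset (List ℕ)), Sw.2 * Tw.2))) Tw
            = (Sw.2 * ∏ r ∈ Sw.1, lw (fun q => f (i :: q)) c r) * (Tw.2 * ∏ q ∈ Tw.1, G q) := by
          intro Tw hTw
          simp only [Function.comp]
          rw [prod_union_one _ _ G ?_]
          · rw [prod_insert_image Sw.1 i G hG1]
            have : ∀ r ∈ Sw.1, G (i :: r) = lw (fun q => f (i :: q)) c r := by
              intro r _
              have := hG 0 c r (by simp)
              simpa [lw] using this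
            rw [Finset.prod_congr rfl this]; ring
          · intro q hq
            rw [Finset.mem_inter] at hq
            rcases runsProd_head rest (i+1) Tw hTw q hq.2 with rfl | ⟨j, r, rfl, hj⟩
            · exact hG1
            · exfalso
              have := hq.1
              simp only [Finset.mem_insert, Finset.mem_image] at this
              rcases this with h | ⟨r', _, h⟩
              · exact absurd h (by simp)
              · injection h with h1 _
                omega
        rw [List.map_congr_left h2, sum_map_mul_left']
        have h3 : ((runsProd (i+1) rest).map fun Tw => Tw.2 * ∏ q ∈ Tw.1, G q).sum
            = evalProd f [] (i+1) rest := by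
          refine sum_runsProd_eq rest (i+1) f G hG1 ?_
          intro k c' r hk
          have := hG (k+1) c' r (by simpa using hk)
          have e : i + (k+1) = i + 1 + k := by omega
          rwa [e] at this
        rw [h3]
      rw [List.map_congr_left h1, sum_map_mul_right',
        sum_runs_eq_eval c (fun q => f (i :: q)), ← eval_cons]
      simp
end
noncomputable def prodExcept (f : List ℕ → ℝ) : ℕ → ℕ → List PCTree → ℝ
  | _, _, [] => 1
  | i, 0, _ :: rest => evalProd f [] (i+1) rest
  | i, k+1, c' :: rest => eval f [i] c' * prodExcept f (i+1) k rest

theorem evalProd_eq_prodExcept : ∀ (cs : List PCTree) (i k : ℕ) (c : PCTree)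
    (f : List ℕ → ℝ), cs[k]? = some c →
    evalProd f [] i cs = eval f [i+k] c * prodExcept f i k cs := by
  intro cs
  induction cs with
  | nil => intro i k c f h; simp at h
  | cons c' rest ih =>
    intro i k c f h
    cases k with
    | zero =>
      simp at h; subst h
      simp [evalProd, prodExcept]
    | succ k' =>
      simp only [List.getElem?_cons_succ] at h
      have := ih (i+1) k' c f h
      simp only [evalProd, prodExcept]
      rw [this]
      have e : i + 1 + k' = i + (k'+1) := by omega
      rw [e]; ring_nf
      simp [List.nil_append]
      ring
theorem filt_runsSum : ∀ (cs : List (ℝ × PCTree)) (i k : ℕ) (pc : ℝ × PCTree)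
    (p : List ℕ) (G : List ℕ → ℝ), cs[k]? = some pc → G [] = 1 →
    (((runsSum i cs).filter fun Sw => ((i+k) :: p) ∈ Sw.1).map
        fun Sw => Sw.2 * ∏ q ∈ Sw.1, G q).sum
    = pc.1 * (((runs pc.2).filter fun Sw => p ∈ Sw.1).map
        fun Sw => Sw.2 * ∏ r ∈ Sw.1, G ((i+k) :: r)).sum := by
  intro cs
  induction cs with
  | nil => intro i k pc p G h hG1; simp at h
  | cons pc' rest ih =>
    intro i k pc p G h hG1
    simp only [runsSum, List.filter_append, List.map_append, List.sum_append]
    rw [sum_map_filter_map']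
    cases k with
    | zero =>
      simp only [List.getElem?_cons_zero, Option.some.injEq] at h
      obtain rfl : pc' = pc := h
      have hpred : ∀ Sw ∈ runs pc'.2,
          (decide (((i+0) :: p) ∈ insert [] (Sw.1.image (i :: ·)))) = decide (p ∈ Sw.1) := by
        intro Sw _
        simp [Finset.mem_insert, Finset.mem_image]
      rw [List.filter_congr hpred]
      have h2 : ((runsSum (i+1) rest).filter fun Sw => ((i+0) :: p) ∈ Sw.1) = [] := by
        refine List.filter_eq_nil_iff.mpr ?_
        intro Sw hSw
        simp only [decide_eq_true_eq]
        intro hmem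
        rcases runsSum_head rest (i+1) Sw hSw _ hmem with h | ⟨j, r, he, hj⟩
        · simp at h
        · injection he with h1 _; omega
      rw [h2]
      have h3 : (((runs pc'.2).filter fun Sw => p ∈ Sw.1).map
            fun Sw : Finset (List ℕ) × ℝ =>
              (fun x : Finset (List ℕ) × ℝ => x.2 * ∏ q ∈ x.1, G q)
                ((fun Sw : Finset (List ℕ) × ℝ =>
                  (insert [] (Sw.1.image (i :: ·)), pc'.1 * Sw.2)) Sw))
          = ((runs pc'.2).filter fun Sw => p ∈ Sw.1).map
            (fun Sw : Finset (List ℕ) × ℝ => pc'.1 * (Sw.2 * ∏ r ∈ Sw.1, G ((i+0) :: r))) := by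
        refine List.map_congr_left ?_
        intro Sw _
        simp only [Nat.add_zero]
        rw [prod_insert_image Sw.1 i G hG1]
        ring
      rw [h3, sum_map_mul_left']
      simp
    | succ k' =>
      simp only [List.getElem?_cons_succ] at h
      have h1 : ((runs pc'.2).filter fun Sw =>
          decide (((i + (k'+1)) :: p) ∈ insert [] (Sw.1.image (i :: ·)))) = [] := by
        refine List.filter_eq_nil_iff.mpr ?_
        intro Sw _
        simp only [decide_eq_true_eq]
        intro hmem
        simp only [Finset.mem_insert, Finset.mem_image] at hmem
        rcases hmem with he | ⟨r, _, he⟩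
        · simp at he
        · injection he with h1 _; omega
      rw [h1]
      have h2 := ih (i+1) k' pc p G h hG1
      have e : i + 1 + k' = i + (k'+1) := by omega
      rw [e] at h2
      rw [h2]
      simp
theorem filt_runsProd : ∀ (cs : List PCTree) (i k : ℕ) (c : PCTree) (p : List ℕ)
    (f G : List ℕ → ℝ), cs[k]? = some c → G [] = 1 →
    (∀ m c' r, cs[m]? = some c' →
      G ((i+m) :: r) = if isLeafAt c' r then f ((i+m) :: r) else 1) →
    (((runsProd i cs).filter fun Sw => ((i+k) :: p) ∈ Sw.1).map
        fun Sw => Sw.2 * ∏ q ∈ Sw.1, G q).sum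
    = (((runs c).filter fun Sw => p ∈ Sw.1).map
        fun Sw => Sw.2 * ∏ r ∈ Sw.1, G ((i+k) :: r)).sum * prodExcept f i k cs := by
  intro cs
  induction cs with
  | nil => intro i k c p f G h hG1 hG; simp at h
  | cons c' rest ih =>
    intro i k c p f G h hG1 hG
    simp only [runsProd]
    rw [sum_map_filter_flatMap']
    have hGr : ∀ m c'' r, rest[m]? = some c'' →
        G ((i+1+m) :: r) = if isLeafAt c'' r then f ((i+1+m) :: r) else 1 := by
      intro m c'' r hm
      have := hG (m+1) c'' r (by simpa using hm)
      have e : i + (m+1) = i + 1 + m := by omega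
      rwa [e] at this
    have hrest : ((runsProd (i+1) rest).map fun Tw => Tw.2 * ∏ q ∈ Tw.1, G q).sum
        = evalProd f [] (i+1) rest := sum_runsProd_eq rest (i+1) f G hG1 hGr
    have hGc' : ∀ r, G (i :: r) = lw (fun q => f (i :: q)) c' r := by
      intro r
      have := hG 0 c' r (by simp)
      simpa [lw] using this
    cases k with
    | zero =>
      simp only [List.getElem?_cons_zero, Option.some.injEq] at h
      obtain rfl : c' = c := h
      -- inner sums
      have hinner : ∀ Sw ∈ runs c',
          (((((runsProd (i+1) rest).map fun Tw =>
                ((insert [] (Sw.1.image (i :: ·)) ∪ Tw.1 : Finset (List ℕ)), Sw.2 * Tw.2)).filter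
              fun Sw => ((i+0) :: p) ∈ Sw.1).map fun Sw => Sw.2 * ∏ q ∈ Sw.1, G q).sum)
          = if p ∈ Sw.1 then
              (Sw.2 * ∏ r ∈ Sw.1, G (i :: r)) * evalProd f [] (i+1) rest else 0 := by
        intro Sw hSw
        rw [sum_map_filter_map']
        have hpred : ∀ Tw ∈ runsProd (i+1) rest,
            (decide (((i+0) :: p) ∈
              (insert [] (Sw.1.image (i :: ·)) ∪ Tw.1 : Finset (List ℕ))))
            = decide (p ∈ Sw.1) := by
          intro Tw hTw
          simp only [Nat.add_zero, Finset.mem_union, Finset.mem_insert, Finset.mem_image]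
          have hno : (i :: p) ∉ Tw.1 := by
            intro hmem
            rcases runsProd_head rest (i+1) Tw hTw _ hmem with he | ⟨j, r, he, hj⟩
            · simp at he
            · injection he with h1 _; omega
          simp [hno]
        rw [List.filter_congr hpred]
        by_cases hp : p ∈ Sw.1
        · rw [if_pos hp]
          have hfil : (runsProd (i+1) rest).filter (fun _ => decide (p ∈ Sw.1))
              = runsProd (i+1) rest := by simp [hp]
          rw [hfil]
          have hmap : ∀ Tw ∈ runsProd (i+1) rest,
              Sw.2 * Tw.2 * ∏ q ∈ insert [] (Sw.1.image (i :: ·)) ∪ Tw.1, G q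
              = (Sw.2 * ∏ r ∈ Sw.1, G (i :: r)) * (Tw.2 * ∏ q ∈ Tw.1, G q) := by
            intro Tw hTw
            rw [prod_union_one _ _ G ?_]
            · rw [prod_insert_image Sw.1 i G hG1]; ring
            · intro q hq
              rw [Finset.mem_inter] at hq
              rcases runsProd_head rest (i+1) Tw hTw q hq.2 with rfl | ⟨j, r, rfl, hj⟩
              · exact hG1
              · exfalso
                have := hq.1
                simp only [Finset.mem_insert, Finset.mem_image] at this
                rcases this with he | ⟨r', _, he⟩
                · simp at he
                · injection he with h1 _; omega
          rw [List.map_congr_left hmap, sum_map_mul_left', hrest]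
        · simp [hp]
      rw [List.map_congr_left hinner]
      have : (runs c').map (fun Sw => if p ∈ Sw.1 then
              (Sw.2 * ∏ r ∈ Sw.1, G (i :: r)) * evalProd f [] (i+1) rest else 0)
          = (runs c').map (fun Sw => if decide (p ∈ Sw.1) then
              ((fun Sw : Finset (List ℕ) × ℝ =>
                (Sw.2 * ∏ r ∈ Sw.1, G (i :: r)) * evalProd f [] (i+1) rest) Sw) else 0) := by
        simp
      rw [this, sum_map_ite', sum_map_mul_right']
      simp only [Nat.add_zero, prodExcept]
    | succ k' =>
      simp only [List.getElem?_cons_succ] at h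
      have hinner : ∀ Sw ∈ runs c',
          (((((runsProd (i+1) rest).map fun Tw =>
                ((insert [] (Sw.1.image (i :: ·)) ∪ Tw.1 : Finset (List ℕ)), Sw.2 * Tw.2)).filter
              fun Sw => ((i+(k'+1)) :: p) ∈ Sw.1).map fun Sw => Sw.2 * ∏ q ∈ Sw.1, G q).sum)
          = (Sw.2 * ∏ r ∈ Sw.1, G (i :: r)) *
              ((((runs c).filter fun Sw => p ∈ Sw.1).map
                fun Sw => Sw.2 * ∏ r ∈ Sw.1, G ((i+(k'+1)) :: r)).sum
                * prodExcept f (i+1) k' rest) := by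
        intro Sw hSw
        rw [sum_map_filter_map']
        have hpred : ∀ Tw ∈ runsProd (i+1) rest,
            (decide (((i+(k'+1)) :: p) ∈
              (insert [] (Sw.1.image (i :: ·)) ∪ Tw.1 : Finset (List ℕ))))
            = decide (((i+(k'+1)) :: p) ∈ Tw.1) := by
          intro Tw hTw
          simp only [Finset.mem_union, Finset.mem_insert, Finset.mem_image]
          have hnA : ¬ ((i+(k'+1)) :: p = [] ∨ ∃ r ∈ Sw.1, i :: r = (i+(k'+1)) :: p) := by
            push_neg
            refine ⟨by simp, ?_⟩
            intro r _ he
            injection he with h1 _; omega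
          simp only [decide_eq_decide]
          constructor
          · intro hh
            rcases hh with hh | hh
            · exact absurd (by tauto) hnA
            · exact hh
          · intro hh; exact Or.inr hh
        rw [List.filter_congr hpred]
        have hmap : ∀ Tw ∈ (runsProd (i+1) rest).filter
              fun Tw => ((i+(k'+1)) :: p) ∈ Tw.1,
            Sw.2 * Tw.2 * ∏ q ∈ insert [] (Sw.1.image (i :: ·)) ∪ Tw.1, G q
            = (Sw.2 * ∏ r ∈ Sw.1, G (i :: r)) * (Tw.2 * ∏ q ∈ Tw.1, G q) := by
          intro Tw hTw'
          have hTw := List.mem_of_mem_filter hTw'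
          rw [prod_union_one _ _ G ?_]
          · rw [prod_insert_image Sw.1 i G hG1]; ring
          · intro q hq
            rw [Finset.mem_inter] at hq
            rcases runsProd_head rest (i+1) Tw hTw q hq.2 with rfl | ⟨j, r, rfl, hj⟩
            · exact hG1
            · exfalso
              have := hq.1
              simp only [Finset.mem_insert, Finset.mem_image] at this
              rcases this with he | ⟨r', _, he⟩
              · simp at he
              · injection he with h1 _; omega
        rw [List.map_congr_left hmap, sum_map_mul_left']
        have e : i + (k'+1) = i + 1 + k' := by omega
        rw [e, ih (i+1) k' c p f G h hG1 hGr]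
      rw [List.map_congr_left hinner]
      have hc' : ∀ Sw : Finset (List ℕ) × ℝ,
          (Sw.2 * ∏ r ∈ Sw.1, G (i :: r)) *
              ((((runs c).filter fun Sw => p ∈ Sw.1).map
                fun Sw => Sw.2 * ∏ r ∈ Sw.1, G ((i+(k'+1)) :: r)).sum
                * prodExcept f (i+1) k' rest)
          = (Sw.2 * ∏ r ∈ Sw.1, lw (fun q => f (i :: q)) c' r) *
              ((((runs c).filter fun Sw => p ∈ Sw.1).map
                fun Sw => Sw.2 * ∏ r ∈ Sw.1, G ((i+(k'+1)) :: r)).sum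
                * prodExcept f (i+1) k' rest) := by
        intro Sw
        congr 2
        exact Finset.prod_congr rfl fun r _ => hGc' r
      simp only [hc']
      rw [sum_map_mul_right', sum_runs_eq_eval c' (fun q => f (i :: q)), ← eval_cons]
      simp only [prodExcept]
      ring
lemma lw_nonneg (f : List ℕ → ℝ) (hf : ∀ q, 0 ≤ f q) (t : PCTree) (q : List ℕ) :
    0 ≤ lw f t q := by
  unfold lw; split
  · exact hf q
  · norm_num

lemma term_nonneg (t : PCTree) (hv : Valid t) (f : List ℕ → ℝ) (hf : ∀ q, 0 ≤ f q) :
    ∀ Sw ∈ runs t, 0 ≤ Sw.2 * ∏ q ∈ Sw.1, lw f t q := fun Sw hSw =>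
  mul_nonneg (runs_nonneg t hv Sw hSw) (Finset.prod_nonneg fun q _ => lw_nonneg f hf t q)

lemma filtered_sum_nonneg {α} (l : List α) (q : α → Bool) (h : α → ℝ)
    (hna : ∀ a ∈ l, 0 ≤ h a) : 0 ≤ ((l.filter q).map h).sum := by
  apply List.sum_nonneg
  intro x hx
  simp only [List.mem_map] at hx
  obtain ⟨a, ha, rfl⟩ := hx
  exact hna a (List.mem_of_mem_filter ha)

lemma filtered_sum_le_total {α} (l : List α) (q : α → Bool) (h : α → ℝ)
    (hna : ∀ a ∈ l, 0 ≤ h a) : ((l.filter q).map h).sum ≤ (l.map h).sum := by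
  have := sum_filter_add_sum_filter_not' l q h
  have h2 : 0 ≤ ((l.filter (fun a => !q a)).map h).sum :=
    filtered_sum_nonneg l _ h hna
  linarith

theorem flow_mul_eval : ∀ (n : List ℕ) (t : PCTree) (f : List ℕ → ℝ),
    Valid t → (∀ q, 0 ≤ f q) → IsNode t n →
    flowAux f t [] n * eval f [] t
    = (((runs t).filter fun Sw => n ∈ Sw.1).map fun Sw => Sw.2 * ∏ q ∈ Sw.1, lw f t q).sum := by
  intro n
  induction n with
  | nil =>
    intro t f hv hf _
    have hfil : (runs t).filter (fun Sw => decide (([] : List ℕ) ∈ Sw.1)) = runs t :=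
      List.filter_eq_self.mpr (fun Sw hSw => by simp [nil_mem_runs t Sw hSw])
    rw [hfil, sum_runs_eq_eval]
    simp [flowAux]
  | cons i p ih =>
    intro t f hv hf hn
    cases t with
    | leaf => rw [IsNode] at hn; exact hn.elim
    | sum cs =>
      cases hcs : cs[i]? with
      | none => rw [IsNode, hcs] at hn; exact hn.elim
      | some pc =>
        rw [IsNode, hcs] at hn
        cases hv with
        | sum hw hvc hs =>
          have hpcmem : pc ∈ cs := by
            have := List.getElem?_eq_some_iff.mp hcs
            obtain ⟨hlt, hget⟩ := this
            exact hget ▸ List.getElem_mem hlt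
          rw [flowAux]
          simp only [hcs, List.nil_append]
          by_cases hE : eval f [] (.sum cs) = 0
          · rw [hE, div_zero, zero_mul, zero_mul]
          -- RHS = 0
            symm
            have h0 := term_nonneg (.sum cs) (Valid.sum hw hvc hs) f hf
            have hA : 0 ≤ (((runs (.sum cs)).filter fun Sw => ((i :: p)) ∈ Sw.1).map
                fun Sw => Sw.2 * ∏ q ∈ Sw.1, lw f (.sum cs) q).sum :=
              filtered_sum_nonneg _ _ _ h0
            have hB : 0 ≤ (((runs (.sum cs)).filter fun Sw => !decide ((i :: p) ∈ Sw.1)).map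
                fun Sw => Sw.2 * ∏ q ∈ Sw.1, lw f (.sum cs) q).sum :=
              filtered_sum_nonneg _ _ _ h0
            have hC := sum_filter_add_sum_filter_not' (runs (.sum cs))
              (fun Sw => decide ((i :: p) ∈ Sw.1))
              (fun Sw => Sw.2 * ∏ q ∈ Sw.1, lw f (.sum cs) q)
            rw [sum_runs_eq_eval, hE] at hC
            linarith
          · have hkey : pc.1 * eval f [i] pc.2 / eval f [] (.sum cs) *
                  flowAux f pc.2 [i] p * eval f [] (.sum cs)
                = pc.1 * (flowAux f pc.2 [i] p * eval f [i] pc.2) := by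
              field_simp
            rw [hkey, flowAux_cons, eval_cons,
              ih pc.2 (fun q => f (i :: q)) (hvc pc hpcmem) (fun q => hf _) hn]
            have hfilt := filt_runsSum cs 0 i pc p (lw f (.sum cs)) (by simpa using hcs)
              (by simp [lw, isLeafAt])
            simp only [Nat.zero_add] at hfilt
            have hruns : runs (.sum cs) = runsSum 0 cs := rfl
            rw [hruns, hfilt]
            congr 1
            refine congrArg List.sum (List.map_congr_left ?_)
            intro Sw _
            congr 1
            refine Finset.prod_congr rfl ?_
            intro r _
            simp [lw, isLeafAt, hcs]
    | prod cs =>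
      cases hcs : cs[i]? with
      | none => rw [IsNode, hcs] at hn; exact hn.elim
      | some c =>
        rw [IsNode, hcs] at hn
        cases hv with
        | prod hvc =>
          have hcmem : c ∈ cs := by
            have := List.getElem?_eq_some_iff.mp hcs
            obtain ⟨hlt, hget⟩ := this
            exact hget ▸ List.getElem_mem hlt
          rw [flowAux]
          simp only [hcs, List.nil_append]
          have hev : eval f [] (.prod cs) = eval f [0+i] c * prodExcept f 0 i cs := by
            rw [show eval f [] (.prod cs) = evalProd f [] 0 cs from rfl]
            exact evalProd_eq_prodExcept cs 0 i c f (by simpa using hcs)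
          rw [hev]
          simp only [Nat.zero_add]
          rw [flowAux_cons, eval_cons, ← mul_assoc,
            ih c (fun q => f (i :: q)) (hvc c hcmem) (fun q => hf _) hn]
          have hfilt := filt_runsProd cs 0 i c p f (lw f (.prod cs)) (by simpa using hcs)
            (by simp [lw, isLeafAt]) ?_
          · simp only [Nat.zero_add] at hfilt
            have hruns : runs (.prod cs) = runsProd 0 cs := rfl
            rw [hruns, hfilt]
            congr 1
            refine congrArg List.sum (List.map_congr_left ?_)
            intro Sw _
            congr 1
            refine Finset.prod_congr rfl ?_
            intro r _
            simp [lw, isLeafAt, hcs]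
          · intro m c' r hm
            simp [lw, isLeafAt, hm]
end PCTree

/-- Circuit flow semantics (tree-shaped PCs): the flow `F_n(x)` of a node (equivalently,
of the sum edge into it) equals the conditional probability, under the generative
sampling process conditioned on the sampled instance being `x`, that the node is
traversed; consequently the flow lies in `[0,1]`. -/
theorem flow_eq_conditional_traversal_prob (t : PCTree) (ht : t.Valid)
    (f : List ℕ → ℝ) (hf : ∀ q, 0 ≤ f q)
    (P : ℝ) (hP : P = (t.runs.map fun Sw => Sw.2 * t.runLike f Sw.1).sum)
    (hPpos : 0 < P) (hPeval : P = PCTree.eval f [] t)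
    (n : List ℕ) (hn : t.IsNode n) :
    PCTree.flow f t n =
      ((t.runs.filter fun Sw => n ∈ Sw.1).map fun Sw => Sw.2 * t.runLike f Sw.1).sum / P ∧
    0 ≤ PCTree.flow f t n ∧ PCTree.flow f t n ≤ 1 := by
  have hrl : ∀ (Sw : Finset (List ℕ) × ℝ),
      Sw.2 * t.runLike f Sw.1 = Sw.2 * ∏ q ∈ Sw.1, PCTree.lw f t q := by
    intro Sw
    unfold PCTree.runLike
    rw [Finset.prod_filter]
    rfl
  have hNum : ((t.runs.filter fun Sw => n ∈ Sw.1).map fun Sw => Sw.2 * t.runLike f Sw.1)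
      = ((t.runs.filter fun Sw => n ∈ Sw.1).map fun Sw => Sw.2 * ∏ q ∈ Sw.1, PCTree.lw f t q) :=
    List.map_congr_left fun Sw _ => hrl Sw
  have hTot : (t.runs.map fun Sw => Sw.2 * t.runLike f Sw.1)
      = (t.runs.map fun Sw => Sw.2 * ∏ q ∈ Sw.1, PCTree.lw f t q) :=
    List.map_congr_left fun Sw _ => hrl Sw
  have hflow := PCTree.flow_mul_eval n t f ht hf hn
  rw [← hPeval] at hflow
  have hPne : P ≠ 0 := ne_of_gt hPpos
  have hN0 : 0 ≤ ((t.runs.filter fun Sw => n ∈ Sw.1).map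
      fun Sw => Sw.2 * t.runLike f Sw.1).sum := by
    rw [hNum]
    exact PCTree.filtered_sum_nonneg _ _ _ (PCTree.term_nonneg t ht f hf)
  have hNle : ((t.runs.filter fun Sw => n ∈ Sw.1).map
      fun Sw => Sw.2 * t.runLike f Sw.1).sum ≤ P := by
    rw [hNum, hP, hTot]
    exact PCTree.filtered_sum_le_total _ _ _ (PCTree.term_nonneg t ht f hf)
  have hEq : PCTree.flow f t n =
      ((t.runs.filter fun Sw => n ∈ Sw.1).map fun Sw => Sw.2 * t.runLike f Sw.1).sum / P := by
    rw [eq_div_iff hPne, hNum]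
    exact hflow
  refine ⟨hEq, ?_, ?_⟩
  · rw [hEq]
    exact div_nonneg hN0 (le_of_lt hPpos)
  · rw [hEq]
    exact (div_le_one hPpos).mpr hNle
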